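/- arXiv:2409.04297 — 3 statements merged into one kernel-verified Lean document; each statement's English description precedes it below -/
import Mathlib

section
/- Let P(λ) = λ²M + λC + K with bounded ε-pseudospectrum Λ_ε(P) = { z : σ_min(P(z)) ≤ ε p_w(|z|) }, and let V be a subspace of ℂⁿ. If V contains a right singular vector v corresponding to σ_min(P(z̄)) for some rightmost point z̄ ∈ Λ_ε(P) (i.e., Re(z̄) = α_ε(P)), then α_ε^V(P) = α_ε(P). -/
open Matrix Complex

/-- Euclidean norm of a complex vector. -/
noncomputable def vnorm {ι : Type*} [Fintype ι] (v : ι → ℂ) : ℝ :=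
  Real.sqrt (∑ i, ‖v i‖ ^ 2)

/-- Smallest singular value of a (possibly rectangular) complex matrix:
the infimum of `‖A v‖` over unit vectors `v`. -/
noncomputable def sigmaMin {ι κ : Type*} [Fintype ι] [Fintype κ]
    (A : Matrix ι κ ℂ) : ℝ :=
  sInf {t : ℝ | ∃ v : κ → ℂ, vnorm v = 1 ∧ t = vnorm (A.mulVec v)}

/-- Spectral (operator 2-) norm of a complex matrix. -/
noncomputable def specNorm {ι κ : Type*} [Fintype ι] [Fintype κ]
    (A : Matrix ι κ ℂ) : ℝ :=
  sSup {t : ℝ | ∃ v : κ → ℂ, vnorm v = 1 ∧ t = vnorm (A.mulVec v)}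

/-- The weight/scaling function `p_w(z) = √(w_m² z⁴ + w_c² z² + w_k²)`. -/
noncomputable def pw (wm wc wk z : ℝ) : ℝ :=
  Real.sqrt (wm ^ 2 * z ^ 4 + wc ^ 2 * z ^ 2 + wk ^ 2)

/-- The quadratic matrix polynomial `P(z) = z² M + z C + K`. -/
noncomputable def Ppoly {n : ℕ} (M C K : Matrix (Fin n) (Fin n) ℂ) (z : ℂ) :
    Matrix (Fin n) (Fin n) ℂ :=
  z ^ 2 • M + z • C + K

/-- The column span (range) of a matrix, viewed as a subspace of `ℂⁿ`. -/
noncomputable def colSpan {n r : ℕ} (A : Matrix (Fin n) (Fin r) ℂ) : Submodule ℂ (Fin n → ℂ) :=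
  Submodule.span ℂ (Set.range fun j => fun i => A i j)


lemma vnorm_nonneg {ι : Type*} [Fintype ι] (v : ι → ℂ) : 0 ≤ vnorm v :=
  Real.sqrt_nonneg _

lemma star_dot_self {ι : Type*} [Fintype ι] (x : ι → ℂ) :
    star x ⬝ᵥ x = ((∑ i, ‖x i‖ ^ 2 : ℝ) : ℂ) := by
  simp only [dotProduct, Pi.star_apply]
  push_cast
  refine Finset.sum_congr rfl fun i _ => ?_
  have : star (x i) = (starRingEnd ℂ) (x i) := rfl
  rw [this, mul_comm, Complex.mul_conj, Complex.normSq_eq_norm_sq]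
  push_cast
  ring

lemma vnorm_mulVec_of_orth {n r : ℕ} (V : Matrix (Fin n) (Fin r) ℂ)
    (hV : Vᴴ * V = 1) (u : Fin r → ℂ) : vnorm (V.mulVec u) = vnorm u := by
  unfold vnorm
  congr 1
  have key : star (V.mulVec u) ⬝ᵥ V.mulVec u = star u ⬝ᵥ u := by
    rw [Matrix.star_mulVec, Matrix.dotProduct_mulVec, Matrix.vecMul_vecMul, hV,
      Matrix.vecMul_one]
  rw [star_dot_self, star_dot_self] at key
  exact_mod_cast key

lemma sigmaMin_bddBelow {ι κ : Type*} [Fintype ι] [Fintype κ] (A : Matrix ι κ ℂ) :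
    BddBelow {t : ℝ | ∃ v : κ → ℂ, vnorm v = 1 ∧ t = vnorm (A.mulVec v)} := by
  refine ⟨0, fun t ht => ?_⟩
  obtain ⟨w, -, rfl⟩ := ht
  exact vnorm_nonneg _

/-- The ε-pseudospectrum of the quadratic matrix polynomial `P(λ)=λ²M+λC+K`
(singular value characterization). -/
noncomputable def Lam {n : ℕ} (M C K : Matrix (Fin n) (Fin n) ℂ)
    (ε wm wc wk : ℝ) : Set ℂ :=
  {z : ℂ | sigmaMin (Ppoly M C K z) ≤ ε * pw wm wc wk ‖z‖}

/-- The restricted ε-pseudospectrum determined by the basis matrix `Vm`. -/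
noncomputable def LamRes {n r : ℕ} (M C K : Matrix (Fin n) (Fin n) ℂ)
    (Vm : Matrix (Fin n) (Fin r) ℂ) (ε wm wc wk : ℝ) : Set ℂ :=
  {z : ℂ | sigmaMin (Ppoly M C K z * Vm) ≤ ε * pw wm wc wk ‖z‖}

/-- Low dimensionality: if the subspace spanned by the orthonormal columns
of `Vm` contains a right singular vector corresponding to `σ_min(P(z̄))` at a rightmost
point `z̄` of the bounded pseudospectrum `Λ_ε(P)`, then `α_ε^V(P) = α_ε(P)`. -/
theorem low_dimensionality
    {n r : ℕ} (hr : 0 < r)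
    (M C K : Matrix (Fin n) (Fin n) ℂ)
    (ε wm wc wk : ℝ) (hε : 0 < ε) (hwm : 0 ≤ wm) (hwc : 0 ≤ wc) (hwk : 0 ≤ wk)
    (Vm : Matrix (Fin n) (Fin r) ℂ) (hVm : Vmᴴ * Vm = 1)
    (hbd : Bornology.IsBounded (Lam M C K ε wm wc wk))
    (zb : ℂ) (hzb : zb ∈ Lam M C K ε wm wc wk)
    (hzbRight : zb.re = sSup (Complex.re '' Lam M C K ε wm wc wk))
    (v : Fin n → ℂ) (hvMem : v ∈ colSpan Vm) (hvUnit : vnorm v = 1)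
    (hvSing : vnorm ((Ppoly M C K zb).mulVec v) = sigmaMin (Ppoly M C K zb)) :
    sSup (Complex.re '' LamRes M C K Vm ε wm wc wk) =
      sSup (Complex.re '' Lam M C K ε wm wc wk) := by
  classical
  set S := Lam M C K ε wm wc wk with hS
  set T := LamRes M C K Vm ε wm wc wk with hT
  obtain ⟨c, hc⟩ : ∃ c : Fin r → ℂ, Vm.mulVec c = v := by
    have : v ∈ LinearMap.range Vm.mulVecLin := by
      rw [Matrix.range_mulVecLin]
      exact hvMem
    obtain ⟨c, hc⟩ := this
    exact ⟨c, hc⟩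
  have hcUnit : vnorm c = 1 := by
    rw [← vnorm_mulVec_of_orth Vm hVm c, hc, hvUnit]
  have hzbT : zb ∈ T := by
    have h1 : sigmaMin (Ppoly M C K zb * Vm) ≤ sigmaMin (Ppoly M C K zb) := by
      rw [← hvSing, ← hc, Matrix.mulVec_mulVec]
      exact csInf_le (sigmaMin_bddBelow _) ⟨c, hcUnit, rfl⟩
    exact le_trans h1 hzb
  have hTS : T ⊆ S := by
    intro z hz
    have h1 : sigmaMin (Ppoly M C K z) ≤ sigmaMin (Ppoly M C K z * Vm) := by
      apply le_csInf
      · have hu0 : vnorm (fun j : Fin r => if j = ⟨0, hr⟩ then (1:ℂ) else 0) = 1 := by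
          unfold vnorm
          have h2 : (∑ i : Fin r,
              ‖(if i = (⟨0, hr⟩ : Fin r) then (1:ℂ) else 0)‖ ^ 2) = 1 := by
            rw [Finset.sum_eq_single (⟨0, hr⟩ : Fin r)]
            · simp
            · intro b _ hb; simp [hb]
            · simp
          rw [h2, Real.sqrt_one]
        exact ⟨_, _, hu0, rfl⟩
      · rintro t ⟨u, hu, rfl⟩
        have huV : vnorm (Vm.mulVec u) = 1 := by
          rw [vnorm_mulVec_of_orth Vm hVm u, hu]
        rw [← Matrix.mulVec_mulVec]
        exact csInf_le (sigmaMin_bddBelow _) ⟨Vm.mulVec u, huV, rfl⟩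
    exact le_trans h1 hz
  have hbddS : BddAbove (Complex.re '' S) := by
    obtain ⟨R, hR⟩ := hbd.exists_norm_le
    refine ⟨R, ?_⟩
    rintro t ⟨z, hzS, rfl⟩
    exact le_trans (Complex.re_le_norm z) (hR z hzS)
  have hbddT : BddAbove (Complex.re '' T) :=
    hbddS.mono (Set.image_mono hTS)
  apply le_antisymm
  · exact csSup_le_csSup hbddS ⟨zb.re, zb, hzbT, rfl⟩ (Set.image_mono hTS)
  · rw [← hzbRight]
    exact le_csSup hbddT ⟨zb, hzbT, rfl⟩
end

section
/- Part 2 of the interpolation theorem: under the same hypotheses, the point z^(ℓ) itself is a rightmost point of the restricted pseudospectrum Λ_ε^{V_k}(P(·; ν^(ℓ))), i.e., z^(ℓ) ∈ Λ_ε^{V_k}(P(·;ν^(ℓ))) and Re(z^(ℓ)) = α_ε^{V_k}(P(·;ν^(ℓ))). -/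
open Matrix Complex

lemma vnorm_sq_eq {ι : Type*} [Fintype ι] (w : ι → ℂ) :
    (∑ i, ‖w i‖ ^ 2 : ℝ) = (star w ⬝ᵥ w).re := by
  rw [dotProduct, Complex.re_sum]
  refine Finset.sum_congr rfl fun i _ => ?_
  simp [Pi.star_apply, Complex.sq_norm, ← Complex.normSq_eq_conj_mul_self]

lemma vnorm_mulVec_isometry {n r : ℕ} (Vm : Matrix (Fin n) (Fin r) ℂ)
    (h : Vmᴴ * Vm = 1) (a : Fin r → ℂ) : vnorm (Vm *ᵥ a) = vnorm a := by
  unfold vnorm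
  congr 1
  rw [vnorm_sq_eq, vnorm_sq_eq]
  congr 1
  rw [star_mulVec, dotProduct_mulVec, vecMul_vecMul, h, vecMul_one]

lemma sigmaMin_le {ι κ : Type*} [Fintype ι] [Fintype κ] (A : Matrix ι κ ℂ)
    (a : κ → ℂ) (ha : vnorm a = 1) : sigmaMin A ≤ vnorm (A.mulVec a) :=
  csInf_le (sigmaMin_bddBelow A) ⟨a, ha, rfl⟩

lemma vnorm_single {r : ℕ} (j : Fin r) : vnorm ((Pi.single j 1 : Fin r → ℂ)) = 1 := by
  have h : (∑ i, ‖(Pi.single j 1 : Fin r → ℂ) i‖ ^ 2) = 1 := by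
    rw [Finset.sum_eq_single j]
    · simp
    · intro b _ hb; simp [Pi.single_apply, hb]
    · simp
  unfold vnorm
  rw [h, Real.sqrt_one]

lemma sigmaMin_mono {n r : ℕ} (A : Matrix (Fin n) (Fin n) ℂ)
    (Vm : Matrix (Fin n) (Fin r) ℂ) (hVm : Vmᴴ * Vm = 1) (hr : 0 < r) :
    sigmaMin A ≤ sigmaMin (A * Vm) := by
  refine csInf_le_csInf (sigmaMin_bddBelow _)
    ⟨_, ⟨Pi.single ⟨0, hr⟩ 1, vnorm_single _, rfl⟩⟩ ?_
  rintro t ⟨w, hw, rfl⟩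
  exact ⟨Vm *ᵥ w, by rw [vnorm_mulVec_isometry Vm hVm]; exact hw,
    by rw [← Matrix.mulVec_mulVec]⟩

/-- under the hypotheses of the value-interpolation result, the rightmost
point `z^(ℓ)` of the full pseudospectrum is itself a rightmost point of the restricted
pseudospectrum: `z^(ℓ) ∈ Λ_ε^{V}(P(·;ν^(ℓ)))` and `Re z^(ℓ) = α_ε^{V}(P(·;ν^(ℓ)))`. -/
theorem hermite_interpolation_rightmost_point
    {n d r : ℕ} (hr : 0 < r)
    (Mf Cf Kf : (Fin d → ℝ) → Matrix (Fin n) (Fin n) ℂ)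
    (νl : Fin d → ℝ)
    (ε wm wc wk : ℝ) (hε : 0 < ε) (hwm : 0 ≤ wm) (hwc : 0 ≤ wc) (hwk : 0 ≤ wk)
    (Vm : Matrix (Fin n) (Fin r) ℂ) (hVm : Vmᴴ * Vm = 1)
    (hbd : Bornology.IsBounded (Lam (Mf νl) (Cf νl) (Kf νl) ε wm wc wk))
    (zl : ℂ) (hzl : zl ∈ Lam (Mf νl) (Cf νl) (Kf νl) ε wm wc wk)
    (hzlRight : zl.re = sSup (Complex.re '' Lam (Mf νl) (Cf νl) (Kf νl) ε wm wc wk))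
    (v : Fin n → ℂ) (hvMem : v ∈ colSpan Vm) (hvUnit : vnorm v = 1)
    (hvSing : vnorm ((Ppoly (Mf νl) (Cf νl) (Kf νl) zl).mulVec v) =
      sigmaMin (Ppoly (Mf νl) (Cf νl) (Kf νl) zl)) :
    zl ∈ LamRes (Mf νl) (Cf νl) (Kf νl) Vm ε wm wc wk ∧
      zl.re = sSup (Complex.re '' LamRes (Mf νl) (Cf νl) (Kf νl) Vm ε wm wc wk) := by
  set P := Ppoly (Mf νl) (Cf νl) (Kf νl) with hP
  have hrange : v ∈ LinearMap.range Vm.mulVecLin := by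
    rw [Matrix.range_mulVecLin]; exact hvMem
  obtain ⟨a, ha⟩ := hrange
  have ha' : Vm *ᵥ a = v := ha
  have hanorm : vnorm a = 1 := by
    rw [← vnorm_mulVec_isometry Vm hVm a, ha']; exact hvUnit
  have hmem : zl ∈ LamRes (Mf νl) (Cf νl) (Kf νl) Vm ε wm wc wk := by
    show sigmaMin (P zl * Vm) ≤ ε * pw wm wc wk ‖zl‖
    calc sigmaMin (P zl * Vm) ≤ vnorm ((P zl * Vm) *ᵥ a) := sigmaMin_le _ a hanorm
      _ = vnorm (P zl *ᵥ v) := by rw [← Matrix.mulVec_mulVec, ha']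
      _ = sigmaMin (P zl) := hvSing
      _ ≤ ε * pw wm wc wk ‖zl‖ := hzl
  have hsub : LamRes (Mf νl) (Cf νl) (Kf νl) Vm ε wm wc wk ⊆
      Lam (Mf νl) (Cf νl) (Kf νl) ε wm wc wk := fun z hz =>
    (sigmaMin_mono (P z) Vm hVm hr).trans hz
  obtain ⟨Cb, hCb⟩ := isBounded_iff_forall_norm_le.mp hbd
  have hbdd : BddAbove (Complex.re '' Lam (Mf νl) (Cf νl) (Kf νl) ε wm wc wk) := by
    refine ⟨Cb, ?_⟩
    rintro _ ⟨z, hzmem, rfl⟩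
    exact (Complex.re_le_norm z).trans (hCb z hzmem)
  have hbddRes : BddAbove (Complex.re '' LamRes (Mf νl) (Cf νl) (Kf νl) Vm ε wm wc wk) :=
    hbdd.mono (Set.image_mono hsub)
  refine ⟨hmem, le_antisymm (le_csSup hbddRes ⟨zl, hmem, rfl⟩) ?_⟩
  rw [hzlRight]
  exact csSup_le_csSup hbdd ⟨zl.re, zl, hmem, rfl⟩ (Set.image_mono hsub)
end

section
/- Global optimality upon stagnation (Theorem 4.5): in the subspace framework, suppose iterates satisfy ν^(k) ∈ argmin over ν ∈ Ω̄ of α_ε^{V_{k-1}}(P(·;ν)) for each k, the value interpolation α_ε(P(·;ν^(j))) = α_ε^{V_m}(P(·;ν^(j))) holds for all m ≥ j ≥ 1, and the monotonicity α_ε^{V}(P(·;ν)) ≤ α_ε(P(·;ν)) holds for all ν and all subspaces V. If ν^(ℓ) = ν^(k) for some 1 ≤ ℓ < k, then ν^(ℓ) is a global minimizer of ν ↦ α_ε(P(·;ν)) over Ω̄. -/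
open Matrix Complex

/-- Smallest singular value of `A` restricted to a subspace `W`
(equals `σ_min(A·W_mat)` for an orthonormal basis matrix `W_mat` of `W`). -/
noncomputable def sigmaMinOn {n : ℕ} (A : Matrix (Fin n) (Fin n) ℂ)
    (W : Submodule ℂ (Fin n → ℂ)) : ℝ :=
  sInf {t : ℝ | ∃ v ∈ W, vnorm v = 1 ∧ t = vnorm (A.mulVec v)}

/-- The full ε-pseudospectral abscissa of the parameter-dependent polynomial. -/
noncomputable def alphaFull {n d : ℕ}
    (Mf Cf Kf : (Fin d → ℝ) → Matrix (Fin n) (Fin n) ℂ)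
    (ε wm wc wk : ℝ) (ν : Fin d → ℝ) : ℝ :=
  sSup (Complex.re '' {z : ℂ |
    sigmaMin (Ppoly (Mf ν) (Cf ν) (Kf ν) z) ≤ ε * pw wm wc wk ‖z‖})

/-- The restricted ε-pseudospectral abscissa, for a restriction subspace `W`. -/
noncomputable def alphaRes {n d : ℕ}
    (Mf Cf Kf : (Fin d → ℝ) → Matrix (Fin n) (Fin n) ℂ)
    (ε wm wc wk : ℝ) (W : Submodule ℂ (Fin n → ℂ)) (ν : Fin d → ℝ) : ℝ :=
  sSup (Complex.re '' {z : ℂ |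
    sigmaMinOn (Ppoly (Mf ν) (Cf ν) (Kf ν) z) W ≤ ε * pw wm wc wk ‖z‖})

/-- global optimality upon stagnation: in the subspace framework with
iterates `ν^(k)` minimizing the reduced abscissa `α_ε^{V_{k-1}}` over the compact set
`Ω̄`, value interpolation `α_ε(ν^(j)) = α_ε^{V_m}(ν^(j))` for all `m ≥ j ≥ 1`, and
monotonicity `α_ε^{V} ≤ α_ε`, stagnation `ν^(ℓ) = ν^(k)` for some `1 ≤ ℓ < k` implies
that `ν^(ℓ)` is a global minimizer of `α_ε` over `Ω̄`. -/
theorem global_optimality_upon_stagnation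
    {n d : ℕ}
    (Mf Cf Kf : (Fin d → ℝ) → Matrix (Fin n) (Fin n) ℂ)
    (ε wm wc wk : ℝ) (hε : 0 < ε) (hwm : 0 ≤ wm) (hwc : 0 ≤ wc) (hwk : 0 ≤ wk)
    (Ωbar : Set (Fin d → ℝ)) (hΩ : IsCompact Ωbar)
    (Vs : ℕ → Submodule ℂ (Fin n → ℂ)) (hVmono : Monotone Vs)
    (νit : ℕ → Fin d → ℝ)
    (hνin : ∀ k, 1 ≤ k → νit k ∈ Ωbar)
    (hargmin : ∀ k, 1 ≤ k → ∀ ν ∈ Ωbar,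
      alphaRes Mf Cf Kf ε wm wc wk (Vs (k - 1)) (νit k) ≤
        alphaRes Mf Cf Kf ε wm wc wk (Vs (k - 1)) ν)
    (hinterp : ∀ j m, 1 ≤ j → j ≤ m →
      alphaFull Mf Cf Kf ε wm wc wk (νit j) =
        alphaRes Mf Cf Kf ε wm wc wk (Vs m) (νit j))
    (hmono : ∀ (W : Submodule ℂ (Fin n → ℂ)) (ν : Fin d → ℝ),
      alphaRes Mf Cf Kf ε wm wc wk W ν ≤ alphaFull Mf Cf Kf ε wm wc wk ν)
    (ℓ k : ℕ) (hℓ : 1 ≤ ℓ) (hℓk : ℓ < k) (hstag : νit ℓ = νit k) :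
    ∀ ν ∈ Ωbar, alphaFull Mf Cf Kf ε wm wc wk (νit ℓ) ≤
      alphaFull Mf Cf Kf ε wm wc wk ν := by
  intro ν hν
  have h1 : alphaFull Mf Cf Kf ε wm wc wk (νit ℓ) =
      alphaRes Mf Cf Kf ε wm wc wk (Vs (k - 1)) (νit ℓ) :=
    hinterp ℓ (k - 1) hℓ (Nat.le_sub_one_of_lt hℓk)
  calc alphaFull Mf Cf Kf ε wm wc wk (νit ℓ)
      = alphaRes Mf Cf Kf ε wm wc wk (Vs (k - 1)) (νit k) := by rw [h1, hstag]
    _ ≤ alphaRes Mf Cf Kf ε wm wc wk (Vs (k - 1)) ν :=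
        hargmin k (le_trans hℓ hℓk.le) ν hν
    _ ≤ alphaFull Mf Cf Kf ε wm wc wk ν := hmono _ _
end
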